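/- arXiv:2001.06662 — 3 statements merged into one kernel-verified Lean document; each statement's English description precedes it below -/
import Mathlib

section
/- Let I and J be k-subsets of [n], each of which is a disjoint union of exactly l intervals (an l-ple interval), with |I| = |J| = k ≥ l. Then I and J are l-intertwining if and only if the set of left endpoints of the intervals of I intertwines the set of left endpoints of the intervals of J, and the set of right endpoints of the intervals of I intertwines the set of right endpoints of the intervals of J. -/
/-- Two finite sets of naturals intertwine: they have the same cardinality `l` and their
sorted elements satisfy `a₁ < b₁ < a₂ < b₂ < ⋯ < a_l < b_l`. -/
def NatIntertwines (A B : Finset ℕ) : Prop :=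
  A.card = B.card ∧
    List.Chain' (· < ·)
      (((A.sort (· ≤ ·)).zip (B.sort (· ≤ ·))).flatMap fun p => [p.1, p.2])

/-- `S` is the `l`-ple interval `[t 0, t' 0] ⊔ ⋯ ⊔ [t (l-1), t' (l-1)]` with left endpoints
`t` and right endpoints `t'`; consecutive intervals are separated by a gap. -/
def IsLpleInterval (l : ℕ) (t t' : Fin l → ℕ) (S : Finset ℕ) : Prop :=
  (∀ j, t j ≤ t' j) ∧
    (∀ (j : ℕ) (h : j + 1 < l), t' ⟨j, by omega⟩ + 2 ≤ t ⟨j + 1, h⟩) ∧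
    S = Finset.univ.biUnion fun j => Finset.Icc (t j) (t' j)

/-- `I` and `J` are `l`-intertwining: there are `l`-subsets `I' ⊆ I`, `J' ⊆ J` with
`I' ∩ J = ∅ = I ∩ J'` such that `I'` intertwines `J'` in one of the two orders. -/
def LIntertwines (l : ℕ) (I J : Finset ℕ) : Prop :=
  ∃ I' J' : Finset ℕ, I' ⊆ I ∧ J' ⊆ J ∧ Disjoint I' J ∧ Disjoint I J' ∧
    I'.card = l ∧ J'.card = l ∧ (NatIntertwines I' J' ∨ NatIntertwines J' I')

lemma sort_image_eq_ofFn {l : ℕ} {f : Fin l → ℕ} (hf : StrictMono f) :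
    (Finset.univ.image f).sort (· ≤ ·) = List.ofFn f := by
  have hcard : (Finset.univ.image f).card = l := by
    rw [Finset.card_image_of_injective _ hf.injective, Finset.card_univ, Fintype.card_fin]
  have hu := Finset.orderEmbOfFin_unique hcard
    (f := f) (fun x => Finset.mem_image_of_mem _ (Finset.mem_univ x)) hf
  apply List.ext_getElem
  · simp [Finset.length_sort, hcard]
  · intro i h1 h2
    have : f ⟨i, by simpa using h2⟩ = _ := congrFun hu ⟨i, by simpa using h2⟩
    rw [Finset.orderEmbOfFin_apply] at this
    simp only [List.getElem_ofFn]
    exact this.symm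

lemma chain'_flatMap_pair (L : List (ℕ × ℕ)) :
    List.Chain' (· < ·) (L.flatMap fun p => [p.1, p.2]) ↔
      List.Chain' (fun p q : ℕ × ℕ => p.2 < q.1) L ∧ ∀ p ∈ L, p.1 < p.2 := by
  unfold List.Chain'
  induction L with
  | nil => simp
  | cons a L ih =>
    cases L with
    | nil => simp
    | cons b L =>
      have hb : ((b :: L).flatMap fun p : ℕ × ℕ => [p.1, p.2])
          = b.1 :: b.2 :: (L.flatMap fun p => [p.1, p.2]) := by simp [List.flatMap_cons]
      have ha : ((a :: b :: L).flatMap fun p : ℕ × ℕ => [p.1, p.2])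
          = a.1 :: a.2 :: ((b :: L).flatMap fun p : ℕ × ℕ => [p.1, p.2]) := by
        simp [List.flatMap_cons]
      rw [hb] at ih
      rw [ha, hb, List.isChain_cons_cons, List.isChain_cons_cons, ih, List.isChain_cons_cons,
        List.forall_mem_cons (l := b :: L)]
      constructor
      · rintro ⟨h1, h2, h3, h4⟩
        exact ⟨⟨h2, h3⟩, h1, h4⟩
      · rintro ⟨⟨h1, h2⟩, h3, h4⟩
        exact ⟨h3, h1, h2, h4⟩

lemma zip_ofFn {l : ℕ} (a b : Fin l → ℕ) :
    (List.ofFn a).zip (List.ofFn b) = List.ofFn (fun i => (a i, b i)) := by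
  apply List.ext_getElem
  · simp
  · intro i h1 h2
    simp [List.getElem_zip]

lemma chain'_ofFn {α : Type*} {R : α → α → Prop} {l : ℕ} (c : Fin l → α) :
    List.Chain' R (List.ofFn c) ↔
      ∀ (i : ℕ) (h : i + 1 < l), R (c ⟨i, by omega⟩) (c ⟨i + 1, h⟩) := by
  rw [List.Chain', List.isChain_iff_getElem]
  constructor
  · intro H i h
    have := H i (by simp only [List.length_ofFn]; omega)
    simpa using this
  · intro H i h
    have h' : i + 1 < l := by simp only [List.length_ofFn] at h; omega
    have := H i h'
    simp only [List.get_eq_getElem, List.getElem_ofFn]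
    convert this using 2 <;> simp

lemma natIntertwines_image_iff {l : ℕ} {a b : Fin l → ℕ}
    (ha : StrictMono a) (hb : StrictMono b) :
    NatIntertwines (Finset.univ.image a) (Finset.univ.image b) ↔
      ((∀ i : Fin l, a i < b i) ∧
        ∀ (i : ℕ) (h : i + 1 < l), b ⟨i, by omega⟩ < a ⟨i + 1, h⟩) := by
  unfold NatIntertwines
  rw [sort_image_eq_ofFn ha, sort_image_eq_ofFn hb, zip_ofFn, chain'_flatMap_pair]
  have hc : (Finset.univ.image a).card = (Finset.univ.image b).card := by
    rw [Finset.card_image_of_injective _ ha.injective,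
      Finset.card_image_of_injective _ hb.injective]
  rw [chain'_ofFn]
  simp only [hc, true_and, List.mem_ofFn]
  constructor
  · rintro ⟨h1, h2⟩
    refine ⟨fun i => h2 _ ⟨i, rfl⟩, h1⟩
  · rintro ⟨h1, h2⟩
    exact ⟨h2, by rintro p ⟨i, rfl⟩; exact h1 i⟩

namespace LpleAux

variable {l : ℕ} {t t' : Fin l → ℕ} {S : Finset ℕ}

lemma sep (h : IsLpleInterval l t t' S) {i j : Fin l} (hij : i < j) :
    t' i + 2 ≤ t j := by
  obtain ⟨h1, h2, -⟩ := h
  obtain ⟨j, hj⟩ := j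
  induction j with
  | zero => exact absurd hij (by simp [Fin.lt_def])
  | succ q ih =>
    rcases Nat.lt_succ_iff_lt_or_eq.mp (show (i : ℕ) < q + 1 from hij) with hq | hq
    · have hql : q < l := by omega
      have := ih hql (by simpa [Fin.lt_def] using hq)
      have h2' := h2 q hj
      have h1' := h1 ⟨q, hql⟩
      omega
    · have h2' := h2 q hj
      have : i = (⟨q, by omega⟩ : Fin l) := by
        apply Fin.ext; simpa using hq
      rw [this]
      exact h2'

lemma left_strictMono (h : IsLpleInterval l t t' S) : StrictMono t := by
  intro i j hij
  have := sep h hij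
  have := h.1 i
  omega

lemma right_strictMono (h : IsLpleInterval l t t' S) : StrictMono t' := by
  intro i j hij
  have := sep h hij
  have := h.1 j
  omega

lemma mem_iff (h : IsLpleInterval l t t' S) {x : ℕ} :
    x ∈ S ↔ ∃ i, t i ≤ x ∧ x ≤ t' i := by
  rw [h.2.2]
  simp [Finset.mem_biUnion, Finset.mem_Icc]

lemma index_unique (h : IsLpleInterval l t t' S) {x : ℕ} {i j : Fin l}
    (hi : t i ≤ x ∧ x ≤ t' i) (hj : t j ≤ x ∧ x ≤ t' j) : i = j := by
  rcases lt_trichotomy i j with hij | hij | hij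
  · have := sep h hij; omega
  · exact hij
  · have := sep h hij; omega

lemma card_eq (h : IsLpleInterval l t t' S) :
    S.card = ∑ i : Fin l, (t' i + 1 - t i) := by
  rw [h.2.2, Finset.card_biUnion]
  · simp [Nat.card_Icc]
  · intro i _ j _ hij
    rw [Function.onFun, Finset.disjoint_left]
    intro x hx hx'
    simp only [Finset.mem_Icc] at hx hx'
    rcases lt_or_gt_of_ne hij with hlt | hlt
    · have := sep h hlt; omega
    · have := sep h hlt; omega

lemma mem_self_left (h : IsLpleInterval l t t' S) (i : Fin l) : t i ∈ S :=
  (mem_iff h).mpr ⟨i, le_refl _, h.1 i⟩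

lemma mem_self_right (h : IsLpleInterval l t t' S) (i : Fin l) : t' i ∈ S :=
  (mem_iff h).mpr ⟨i, h.1 i, le_refl _⟩

end LpleAux

namespace LpleAux

lemma strictMono_fin_id {l : ℕ} {m : Fin l → Fin l} (hm : StrictMono m) : ∀ i, m i = i := by
  haveI h : WellFoundedLT (Fin l) := inferInstance
  intro i
  exact le_antisymm hm.apply_le (StrictMono.le_apply (β := Fin l) hm (x := i))

lemma forward_aux {l : ℕ} {t t' s s' : Fin l → ℕ} {I J : Finset ℕ}
    (hIint : IsLpleInterval l t t' I) (hJint : IsLpleInterval l s s' J)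
    {a b : Fin l → ℕ} (ha : StrictMono a) (hb : StrictMono b)
    (haI : ∀ i, a i ∈ I) (haJ : ∀ i, a i ∉ J)
    (hbJ : ∀ i, b i ∈ J) (hbI : ∀ i, b i ∉ I)
    (hab : ∀ i, a i < b i)
    (hba : ∀ (i : ℕ) (h : i + 1 < l), b ⟨i, by omega⟩ < a ⟨i + 1, h⟩) :
    (∀ i : Fin l, t i < s i) ∧
    (∀ (i : ℕ) (h : i + 1 < l), s ⟨i, by omega⟩ < t ⟨i + 1, h⟩) ∧
    (∀ i : Fin l, t' i < s' i) ∧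
    (∀ (i : ℕ) (h : i + 1 < l), s' ⟨i, by omega⟩ < t' ⟨i + 1, h⟩) := by
  -- locate each a i in its interval
  have hmex : ∀ i, ∃ j, t j ≤ a i ∧ a i ≤ t' j := fun i => (mem_iff hIint).mp (haI i)
  choose m hm1 hm2 using hmex
  have hmmono : StrictMono m := by
    intro i j hij
    rcases lt_trichotomy (m i) (m j) with h | h | h
    · exact h
    · exfalso
      have hij' : (i : ℕ) + 1 ≤ (j : ℕ) := hij
      have hj1 : (i : ℕ) + 1 < l := by omega
      have hb1 : b i < a ⟨(i : ℕ) + 1, hj1⟩ := by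
        exact hba i hj1
      have ha2 : a (⟨(i : ℕ) + 1, hj1⟩ : Fin l) ≤ a j := by
        rcases eq_or_lt_of_le (show (⟨(i : ℕ) + 1, hj1⟩ : Fin l) ≤ j from hij') with he | hlt
        · rw [he]
        · exact le_of_lt (ha hlt)
      apply hbI i
      rw [mem_iff hIint]
      refine ⟨m i, ?_, ?_⟩
      · have := hm1 i; have := hab i; omega
      · have := hm2 j; rw [← h] at this; omega
    · exfalso
      have hsep := sep hIint h
      have := hm1 i; have := hm2 j
      have := ha hij
      omega
  have hma : ∀ i, m i = i := strictMono_fin_id hmmono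
  have hta : ∀ i, t i ≤ a i ∧ a i ≤ t' i := by
    intro i; constructor
    · have := hm1 i; rwa [hma i] at this
    · have := hm2 i; rwa [hma i] at this
  -- locate each b i
  have hm'ex : ∀ i, ∃ j, s j ≤ b i ∧ b i ≤ s' j := fun i => (mem_iff hJint).mp (hbJ i)
  choose m' hm'1 hm'2 using hm'ex
  have hm'mono : StrictMono m' := by
    intro i j hij
    rcases lt_trichotomy (m' i) (m' j) with h | h | h
    · exact h
    · exfalso
      have hij' : (i : ℕ) + 1 ≤ (j : ℕ) := hij
      have hj1 : (i : ℕ) + 1 < l := by omega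
      have hb1 : b i < a ⟨(i : ℕ) + 1, hj1⟩ := by
        exact hba i hj1
      have ha2 : a (⟨(i : ℕ) + 1, hj1⟩ : Fin l) < b j := by
        calc a (⟨(i : ℕ) + 1, hj1⟩ : Fin l) ≤ a j := by
              rcases eq_or_lt_of_le (show (⟨(i : ℕ) + 1, hj1⟩ : Fin l) ≤ j from hij') with he | hlt
              · rw [he]
              · exact le_of_lt (ha hlt)
          _ < b j := hab j
      apply haJ ⟨(i : ℕ) + 1, hj1⟩
      rw [mem_iff hJint]
      refine ⟨m' i, ?_, ?_⟩
      · have := hm'1 i; omega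
      · have := hm'2 j; rw [← h] at this; omega
    · exfalso
      have hsep := sep hJint h
      have := hm'1 i; have := hm'2 j
      have := hb hij
      omega
  have hm'b : ∀ i, m' i = i := strictMono_fin_id hm'mono
  have hsb : ∀ i, s i ≤ b i ∧ b i ≤ s' i := by
    intro i; constructor
    · have := hm'1 i; rwa [hm'b i] at this
    · have := hm'2 i; rwa [hm'b i] at this
  -- the four families of inequalities
  have h1 : ∀ i : Fin l, t i < s i := by
    intro i
    by_contra hc
    push_neg at hc
    apply haJ i
    rw [mem_iff hJint]
    exact ⟨i, by have := (hta i).1; omega, by have := hab i; have := (hsb i).2; omega⟩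
  have h3 : ∀ i : Fin l, t' i < s' i := by
    intro i
    by_contra hc
    push_neg at hc
    apply hbI i
    rw [mem_iff hIint]
    exact ⟨i, by have := (hsb i).1; have := h1 i; omega, by have := (hsb i).2; omega⟩
  refine ⟨h1, ?_, h3, ?_⟩
  · intro i h
    by_contra hc
    push_neg at hc
    apply hbI ⟨i, by omega⟩
    rw [mem_iff hIint]
    refine ⟨⟨i + 1, h⟩, by have := (hsb ⟨i, by omega⟩).1; omega, ?_⟩
    have h5 := hba i h
    have := (hta ⟨i + 1, h⟩).2
    omega
  · intro i h
    by_contra hc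
    push_neg at hc
    apply haJ ⟨i + 1, h⟩
    rw [mem_iff hJint]
    refine ⟨⟨i, by omega⟩, ?_, by have := (hta ⟨i + 1, h⟩).2; omega⟩
    have h2 : s ⟨i, by omega⟩ < t ⟨i + 1, h⟩ := by
      by_contra hc2
      push_neg at hc2
      apply hbI ⟨i, by omega⟩
      rw [mem_iff hIint]
      refine ⟨⟨i + 1, h⟩, by have := (hsb ⟨i, by omega⟩).1; omega, ?_⟩
      have h5 := hba i h
      have := (hta ⟨i + 1, h⟩).2
      omega
    have := (hta ⟨i + 1, h⟩).1
    omega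

-- cross inequalities: endpoint chains extended to arbitrary index pairs
lemma cross_lt {l : ℕ} {u v : Fin l → ℕ} (hv : StrictMono v)
    (h : ∀ (i : ℕ) (hi : i + 1 < l), u ⟨i, by omega⟩ < v ⟨i + 1, hi⟩)
    {i j : Fin l} (hij : i < j) : u i < v j := by
  have h1 : (i : ℕ) + 1 < l := by have := j.2; have : (i:ℕ) < (j:ℕ) := hij; omega
  have h2 := h i h1
  rcases eq_or_lt_of_le (show (⟨(i:ℕ)+1, h1⟩ : Fin l) ≤ j from by
    simpa [Fin.le_def] using hij) with he | hlt
  · rw [← he]; exact h2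
  · exact lt_trans h2 (hv hlt)

lemma strictMono_of_lt_succ {l : ℕ} {f : Fin l → ℕ}
    (h : ∀ (i : ℕ) (hi : i + 1 < l), f ⟨i, by omega⟩ < f ⟨i + 1, hi⟩) :
    StrictMono f := by
  have key : ∀ (q : ℕ) (hq : q < l) (p : ℕ) (hp : p < q), f ⟨p, by omega⟩ < f ⟨q, hq⟩ := by
    intro q
    induction q with
    | zero => omega
    | succ q ih =>
      intro hq p hp
      rcases Nat.lt_succ_iff_lt_or_eq.mp hp with h' | h'
      · exact lt_trans (ih (by omega) p h') (h q hq)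
      · subst h'; exact h p hq
  intro i j hij
  have := key (j : ℕ) j.2 (i : ℕ) hij
  simpa using this

lemma backward_aux {l : ℕ} (hl : 1 ≤ l) {t t' s s' : Fin l → ℕ} {I J : Finset ℕ}
    (hIint : IsLpleInterval l t t' I) (hJint : IsLpleInterval l s s' J)
    (hJ1 : ∀ x ∈ J, 1 ≤ x)
    (h1 : ∀ i : Fin l, t i < s i)
    (h2 : ∀ (i : ℕ) (h : i + 1 < l), s ⟨i, by omega⟩ < t ⟨i + 1, h⟩)
    (h3 : ∀ i : Fin l, t' i < s' i)
    (h4 : ∀ (i : ℕ) (h : i + 1 < l), s' ⟨i, by omega⟩ < t' ⟨i + 1, h⟩) :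
    LIntertwines l I J := by
  have hsmono := left_strictMono hJint
  have htmono := left_strictMono hIint
  have ht'mono := right_strictMono hIint
  have hs'mono := right_strictMono hJint
  -- a i : element of i-th interval of I not in J
  set a : Fin l → ℕ := fun i => if t' i ∈ J then s i - 1 else t' i with ha_def
  set b : Fin l → ℕ := fun i =>
    if h : (i : ℕ) + 1 < l then
      (if s' i ∈ I then t ⟨(i : ℕ) + 1, h⟩ - 1 else s' i)
    else s' i with hb_def
  -- basic facts about a
  have hsi1 : ∀ i : Fin l, 1 ≤ s i := fun i => hJ1 _ (mem_self_left hJint i)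
  have hFa : ∀ i : Fin l, t' i ∈ J → s i ≤ t' i := by
    intro i hmem
    obtain ⟨m, hm1, hm2⟩ := (mem_iff hJint).mp hmem
    rcases lt_trichotomy m i with hmi | hmi | hmi
    · have := cross_lt ht'mono h4 hmi; omega
    · rw [hmi] at hm1; exact hm1
    · have hsep := sep hIint hmi
      have := h1 m; omega
  have haI : ∀ i, t i ≤ a i ∧ a i ≤ t' i := by
    intro i
    rw [ha_def]
    by_cases hmem : t' i ∈ J <;> simp only [hmem, if_true, if_false]
    · have := hFa i hmem; have := h1 i; omega
    · exact ⟨hIint.1 i, le_refl _⟩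
  have haJ : ∀ i, a i ∉ J := by
    intro i
    show (if t' i ∈ J then s i - 1 else t' i) ∉ J
    by_cases hmem : t' i ∈ J
    · rw [if_pos hmem]
      intro hc
      obtain ⟨m, hm1, hm2⟩ := (mem_iff hJint).mp hc
      have hs1 := hsi1 i
      rcases lt_trichotomy m i with hmi | hmi | hmi
      · have := sep hJint hmi; omega
      · rw [hmi] at hm1; omega
      · have : s i < s m := hsmono hmi; omega
    · rw [if_neg hmem]; exact hmem
  -- basic facts about b
  have hFb : ∀ (i : ℕ) (h : i + 1 < l), s' ⟨i, by omega⟩ ∈ I →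
      t ⟨i + 1, h⟩ ≤ s' ⟨i, by omega⟩ := by
    intro i h hmem
    obtain ⟨m, hm1, hm2⟩ := (mem_iff hIint).mp hmem
    rcases lt_trichotomy m ⟨i + 1, h⟩ with hmi | hmi | hmi
    · exfalso
      have hm_le : m ≤ (⟨i, by omega⟩ : Fin l) := by
        simp only [Fin.le_def, Fin.lt_def] at hmi ⊢; omega
      have : t' m ≤ t' ⟨i, by omega⟩ := ht'mono.monotone hm_le
      have := h3 ⟨i, by omega⟩; omega
    · rw [hmi] at hm1; exact hm1
    · exfalso
      have := sep hIint hmi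
      have := h4 i h; omega
  have hlastb : ∀ i : Fin l, ¬ ((i : ℕ) + 1 < l) → s' i ∉ I := by
    intro i hi hc
    obtain ⟨m, hm1, hm2⟩ := (mem_iff hIint).mp hc
    have hm_le : m ≤ i := by
      have := m.2; simp only [Fin.le_def]; omega
    have : t' m ≤ t' i := ht'mono.monotone hm_le
    have := h3 i; omega
  have ht1 : ∀ (i : ℕ) (h : i + 1 < l), 1 ≤ t ⟨i + 1, h⟩ := by
    intro i h
    have := sep hIint (show (⟨i, by omega⟩ : Fin l) < ⟨i + 1, h⟩ from by
      simp [Fin.lt_def])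
    omega
  have hbJ : ∀ i, s i ≤ b i ∧ b i ≤ s' i := by
    intro i
    rw [hb_def]
    by_cases h : (i : ℕ) + 1 < l
    · simp only [h, dif_pos]
      by_cases hmem : s' i ∈ I <;> simp only [hmem, if_true, if_false]
      · have hfb := hFb i h (by simpa using hmem)
        have hh2 := h2 i h
        simp only [Fin.eta] at hfb
        simp only [Fin.eta] at hh2
        constructor <;> omega
      · exact ⟨hJint.1 i, le_refl _⟩
    · simp only [h, dif_neg, not_false_iff]
      exact ⟨hJint.1 i, le_refl _⟩
  have hbI : ∀ i, b i ∉ I := by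
    intro i
    show (if h : (i : ℕ) + 1 < l then
      (if s' i ∈ I then t ⟨(i : ℕ) + 1, h⟩ - 1 else s' i) else s' i) ∉ I
    by_cases h : (i : ℕ) + 1 < l
    · rw [dif_pos h]
      by_cases hmem : s' i ∈ I
      · rw [if_pos hmem]
        intro hc
        obtain ⟨m, hm1, hm2⟩ := (mem_iff hIint).mp hc
        have htt := ht1 i h
        rcases lt_trichotomy m (⟨(i:ℕ) + 1, h⟩ : Fin l) with hmi | hmi | hmi
        · have hm_le : m ≤ (⟨i, by omega⟩ : Fin l) := by
            simp only [Fin.le_def, Fin.lt_def] at hmi ⊢; omega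
          have h5 : t' m ≤ t' ⟨i, by omega⟩ := ht'mono.monotone hm_le
          have := sep hIint (show (⟨i, by omega⟩ : Fin l) < ⟨i + 1, h⟩ from by
            simp [Fin.lt_def])
          omega
        · rw [hmi] at hm1; omega
        · have : t ⟨↑i + 1, h⟩ < t m := htmono hmi; omega
      · rw [if_neg hmem]; exact hmem
    · rw [dif_neg h]
      exact hlastb i h
  -- chain inequalities
  have ht'b : ∀ i, t' i < b i := by
    intro i
    rw [hb_def]
    by_cases h : (i : ℕ) + 1 < l
    · simp only [h, dif_pos]
      by_cases hmem : s' i ∈ I <;> simp only [hmem, if_true, if_false]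
      · have := sep hIint (show (⟨i, by omega⟩ : Fin l) < ⟨i + 1, h⟩ from by
          simp [Fin.lt_def])
        simp only [Fin.eta] at this
        omega
      · exact h3 i
    · simp only [h, dif_neg, not_false_iff]
      exact h3 i
  have hs'a : ∀ (i : ℕ) (h : i + 1 < l), s' ⟨i, by omega⟩ < a ⟨i + 1, h⟩ := by
    intro i h
    rw [ha_def]
    by_cases hmem : t' ⟨i + 1, h⟩ ∈ J <;> simp only [hmem, if_true, if_false]
    · have := sep hJint (show (⟨i, by omega⟩ : Fin l) < ⟨i + 1, h⟩ from by
        simp [Fin.lt_def])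
      have := hsi1 ⟨i + 1, h⟩
      omega
    · exact h4 i h
  have hab : ∀ i, a i < b i := fun i => lt_of_le_of_lt (haI i).2 (ht'b i)
  have hba : ∀ (i : ℕ) (h : i + 1 < l), b ⟨i, by omega⟩ < a ⟨i + 1, h⟩ := by
    intro i h
    exact lt_of_le_of_lt (hbJ ⟨i, by omega⟩).2 (hs'a i h)
  -- strict monotonicity
  have hamono : StrictMono a := by
    apply strictMono_of_lt_succ
    intro i hi
    calc a ⟨i, by omega⟩ ≤ t' ⟨i, by omega⟩ := (haI _).2
      _ < b ⟨i, by omega⟩ := ht'b _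
      _ ≤ s' ⟨i, by omega⟩ := (hbJ _).2
      _ < a ⟨i + 1, hi⟩ := hs'a i hi
  have hbmono : StrictMono b := by
    apply strictMono_of_lt_succ
    intro i hi
    calc b ⟨i, by omega⟩ < a ⟨i + 1, hi⟩ := hba i hi
      _ ≤ t' ⟨i + 1, hi⟩ := (haI _).2
      _ < b ⟨i + 1, hi⟩ := ht'b _
  -- assemble
  refine ⟨Finset.univ.image a, Finset.univ.image b, ?_, ?_, ?_, ?_, ?_, ?_, ?_⟩
  · intro x hx
    obtain ⟨i, -, rfl⟩ := Finset.mem_image.mp hx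
    exact (mem_iff hIint).mpr ⟨i, (haI i).1, (haI i).2⟩
  · intro x hx
    obtain ⟨i, -, rfl⟩ := Finset.mem_image.mp hx
    exact (mem_iff hJint).mpr ⟨i, (hbJ i).1, (hbJ i).2⟩
  · rw [Finset.disjoint_left]
    intro x hx
    obtain ⟨i, -, rfl⟩ := Finset.mem_image.mp hx
    exact haJ i
  · rw [Finset.disjoint_right]
    intro x hx
    obtain ⟨i, -, rfl⟩ := Finset.mem_image.mp hx
    exact hbI i
  · rw [Finset.card_image_of_injective _ hamono.injective, Finset.card_univ,
      Fintype.card_fin]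
  · rw [Finset.card_image_of_injective _ hbmono.injective, Finset.card_univ,
      Fintype.card_fin]
  · exact Or.inl ((natIntertwines_image_iff hamono hbmono).mpr ⟨hab, hba⟩)

end LpleAux

namespace LpleAux

lemma image_orderEmbOfFin (A : Finset ℕ) {l : ℕ} (h : A.card = l) :
    Finset.univ.image ⇑(A.orderEmbOfFin h) = A := by
  apply Finset.coe_injective
  rw [Finset.coe_image, Finset.coe_univ, Set.image_univ, Finset.range_orderEmbOfFin]

lemma lIntertwines_symm {l : ℕ} {I J : Finset ℕ} (h : LIntertwines l J I) :
    LIntertwines l I J := by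
  obtain ⟨A, B, h1, h2, h3, h4, h5, h6, h7⟩ := h
  exact ⟨B, A, h2, h1, h4.symm, h3.symm, h6, h5, h7.symm⟩

end LpleAux


open LpleAux in
/-- Two `l`-ple interval `k`-subsets of `[n]` are `l`-intertwining iff their left endpoint
sets intertwine and their right endpoint sets intertwine. -/
theorem lple_intervals_lIntertwine_iff_endpoints
    (n k l : ℕ) (hl : 1 ≤ l) (hlk : l ≤ k)
    (I J : Finset ℕ) (hI : I ⊆ Finset.Icc 1 n) (hJ : J ⊆ Finset.Icc 1 n)
    (hIc : I.card = k) (hJc : J.card = k)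
    (t t' s s' : Fin l → ℕ)
    (hIint : IsLpleInterval l t t' I) (hJint : IsLpleInterval l s s' J) :
    LIntertwines l I J ↔
      ((NatIntertwines (Finset.univ.image t) (Finset.univ.image s) ∨
        NatIntertwines (Finset.univ.image s) (Finset.univ.image t)) ∧
       (NatIntertwines (Finset.univ.image t') (Finset.univ.image s') ∨
        NatIntertwines (Finset.univ.image s') (Finset.univ.image t'))) := by
  have htmono := left_strictMono hIint
  have hsmono := left_strictMono hJint
  have ht'mono := right_strictMono hIint
  have hs'mono := right_strictMono hJint
  haveI : Nonempty (Fin l) := ⟨⟨0, hl⟩⟩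
  constructor
  · rintro ⟨I', J', hI'sub, hJ'sub, hdisj1, hdisj2, hI'c, hJ'c, hor⟩
    have himI : Finset.univ.image ⇑(I'.orderEmbOfFin hI'c) = I' := image_orderEmbOfFin _ _
    have himJ : Finset.univ.image ⇑(J'.orderEmbOfFin hJ'c) = J' := image_orderEmbOfFin _ _
    have haI : ∀ i, (I'.orderEmbOfFin hI'c) i ∈ I :=
      fun i => hI'sub (Finset.orderEmbOfFin_mem _ _ _)
    have haJ : ∀ i, (I'.orderEmbOfFin hI'c) i ∉ J :=
      fun i => Finset.disjoint_left.mp hdisj1 (Finset.orderEmbOfFin_mem _ _ _)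
    have hbJ : ∀ i, (J'.orderEmbOfFin hJ'c) i ∈ J :=
      fun i => hJ'sub (Finset.orderEmbOfFin_mem _ _ _)
    have hbI : ∀ i, (J'.orderEmbOfFin hJ'c) i ∉ I :=
      fun i => Finset.disjoint_right.mp hdisj2 (Finset.orderEmbOfFin_mem _ _ _)
    rcases hor with hnat | hnat
    · have key := (natIntertwines_image_iff (I'.orderEmbOfFin hI'c).strictMono
        (J'.orderEmbOfFin hJ'c).strictMono).mp (by rw [himI, himJ]; exact hnat)
      obtain ⟨F1, F2, F3, F4⟩ := forward_aux hIint hJint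
        (I'.orderEmbOfFin hI'c).strictMono (J'.orderEmbOfFin hJ'c).strictMono
        haI haJ hbJ hbI key.1 key.2
      exact ⟨Or.inl ((natIntertwines_image_iff htmono hsmono).mpr ⟨F1, F2⟩),
        Or.inl ((natIntertwines_image_iff ht'mono hs'mono).mpr ⟨F3, F4⟩)⟩
    · have key := (natIntertwines_image_iff (J'.orderEmbOfFin hJ'c).strictMono
        (I'.orderEmbOfFin hI'c).strictMono).mp (by rw [himI, himJ]; exact hnat)
      obtain ⟨F1, F2, F3, F4⟩ := forward_aux hJint hIint
        (J'.orderEmbOfFin hJ'c).strictMono (I'.orderEmbOfFin hI'c).strictMono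
        hbJ hbI haI haJ key.1 key.2
      exact ⟨Or.inr ((natIntertwines_image_iff hsmono htmono).mpr ⟨F1, F2⟩),
        Or.inr ((natIntertwines_image_iff hs'mono ht'mono).mpr ⟨F3, F4⟩)⟩
  · rintro ⟨hL, hR⟩
    have hcardI := card_eq hIint
    have hcardJ := card_eq hJint
    rcases hL with hL | hL <;> rcases hR with hR | hR
    · obtain ⟨T1, T2⟩ := (natIntertwines_image_iff htmono hsmono).mp hL
      obtain ⟨T3, T4⟩ := (natIntertwines_image_iff ht'mono hs'mono).mp hR
      exact backward_aux hl hIint hJint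
        (fun x hx => (Finset.mem_Icc.mp (hJ hx)).1) T1 T2 T3 T4
    · exfalso
      obtain ⟨T1, -⟩ := (natIntertwines_image_iff htmono hsmono).mp hL
      obtain ⟨T3, -⟩ := (natIntertwines_image_iff hs'mono ht'mono).mp hR
      have hsum : ∑ i : Fin l, (s' i + 1 - s i) < ∑ i : Fin l, (t' i + 1 - t i) := by
        apply Finset.sum_lt_sum_of_nonempty Finset.univ_nonempty
        intro i _
        have := hIint.1 i; have := hJint.1 i; have := T1 i; have := T3 i
        omega
      omega
    · exfalso
      obtain ⟨T1, -⟩ := (natIntertwines_image_iff hsmono htmono).mp hL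
      obtain ⟨T3, -⟩ := (natIntertwines_image_iff ht'mono hs'mono).mp hR
      have hsum : ∑ i : Fin l, (t' i + 1 - t i) < ∑ i : Fin l, (s' i + 1 - s i) := by
        apply Finset.sum_lt_sum_of_nonempty Finset.univ_nonempty
        intro i _
        have := hIint.1 i; have := hJint.1 i; have := T1 i; have := T3 i
        omega
      omega
    · obtain ⟨T1, T2⟩ := (natIntertwines_image_iff hsmono htmono).mp hL
      obtain ⟨T3, T4⟩ := (natIntertwines_image_iff hs'mono ht'mono).mp hR
      exact lIntertwines_symm (backward_aux hl hJint hIint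
        (fun x hx => (Finset.mem_Icc.mp (hI hx)).1) T1 T2 T3 T4)
end

section
/- Let 𝒯 be a slice: a non-intertwining collection of binomial(n-l-1, l-1) l-subsets of [n] (each with cyclic gaps at least 2) such that for some i the gap-vector map φ_i gives a bijection from 𝒯 onto the set of l-tuples of nonnegative integers summing to n - 2l. For l ≤ k ≤ n-l, define C_k(𝒯) to be the set of k-subsets of [n] that are l-ple intervals whose set of left endpoints lies in 𝒯. Then |C_k(𝒯)| = binomial(k-1, l-1) · binomial(n-k-1, l-1). -/
/-- The position of `x` in the cyclic order on `ℤ/n` starting at `i`. -/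
def ord {n : ℕ} (i x : ZMod n) : ℕ := (x - i).val

/-- Two finite subsets of `ℤ/n` intertwine under some cyclic ordering of `[n]`. -/
def CycIntertwines {n : ℕ} (A B : Finset (ZMod n)) : Prop :=
  ∃ i : ZMod n, NatIntertwines (A.image (ord i)) (B.image (ord i))

/-- Two subsets `I`, `J` of `ℤ/n` are (cyclically) `l`-intertwining: there are
`l`-subsets `I' ⊆ I \ J` and `J' ⊆ J \ I` which intertwine (in either order) under some
cyclic ordering. -/
def CycLIntertwines {n : ℕ} (l : ℕ) (I J : Finset (ZMod n)) : Prop :=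
  ∃ I' J' : Finset (ZMod n), I' ⊆ I \ J ∧ J' ⊆ J \ I ∧ I'.card = l ∧ J'.card = l ∧
    (CycIntertwines I' J' ∨ CycIntertwines J' I')

/-- The set of left endpoints of `S ⊆ ℤ/n`: elements of `S` whose predecessor is not
in `S`. -/
def leftEnd {n : ℕ} (S : Finset (ZMod n)) : Finset (ZMod n) :=
  S.filter fun x => x - 1 ∉ S

/-- The gap vector of a sorted list of positions: consecutive differences minus 2,
cyclically (arithmetic modulo `n`). -/
def phiList (n : ℕ) (L : List ℕ) : List ℕ :=
  (L.zip (L.rotate 1)).map fun p => (p.2 + n - p.1 - 2) % n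

/-- The map `φᵢ` of Definition 3.4: the gap vector of an `l`-subset of `ℤ/n`, listed in
the cyclic order starting at `i`. -/
def phi {n : ℕ} (i : ZMod n) (T : Finset (ZMod n)) : List ℕ :=
  phiList n ((T.image (ord i)).sort (· ≤ ·))

def natLE (P : Finset ℕ) : Finset ℕ := P.filter fun a => a = 0 ∨ a - 1 ∉ P

lemma exists_add_notMem (P : Finset ℕ) (a : ℕ) : ∃ m, a + m ∉ P :=
  ⟨P.sup id + 1, fun h => by have := Finset.le_sup (f := id) h; simp only [id] at this; omega⟩

noncomputable def runLen (P : Finset ℕ) (a : ℕ) : ℕ := Nat.find (exists_add_notMem P a)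

lemma runLen_spec (P : Finset ℕ) (a : ℕ) : a + runLen P a ∉ P := by
  rw [runLen]; exact Nat.find_spec (exists_add_notMem P a)

lemma runLen_min {P : Finset ℕ} {a m : ℕ} (h : m < runLen P a) : a + m ∈ P := by
  rw [runLen] at h
  have := Nat.find_min (exists_add_notMem P a) h; simpa using this

lemma runLen_le {P : Finset ℕ} {a m : ℕ} (h : a + m ∉ P) : runLen P a ≤ m := Nat.find_le h

lemma runLen_pos {P : Finset ℕ} {a : ℕ} (h : a ∈ P) : 1 ≤ runLen P a := by
  rcases Nat.eq_zero_or_pos (runLen P a) with h0 | h0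
  · exfalso; have := runLen_spec P a; rw [h0] at this; simp at this; exact this h
  · exact h0

def runs (l : ℕ) (q μ : Fin l → ℕ) : Finset ℕ :=
  Finset.univ.biUnion fun j => Finset.Icc (q j) (q j + μ j)

lemma mem_runs {l : ℕ} {q μ : Fin l → ℕ} {a : ℕ} :
    a ∈ runs l q μ ↔ ∃ j, q j ≤ a ∧ a ≤ q j + μ j := by
  simp [runs, Finset.mem_biUnion]

section NatSection

variable {l N : ℕ} {q g : Fin l → ℕ}

def StepHyp (l N : ℕ) (q g : Fin l → ℕ) : Prop :=
  ∀ j : Fin l, q j + g j + 2 = if h : (j : ℕ) + 1 < l then q ⟨(j : ℕ) + 1, h⟩ else N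

lemma StepHyp.le_of_lt (H : StepHyp l N q g) {j j' : Fin l} (h : (j : ℕ) < (j' : ℕ)) :
    q j + g j + 2 ≤ q j' := by
  obtain ⟨d, hd⟩ : ∃ d, (j' : ℕ) = (j : ℕ) + 1 + d := ⟨(j' : ℕ) - (j : ℕ) - 1, by omega⟩
  induction d generalizing j' with
  | zero =>
    have hj1 : (j : ℕ) + 1 < l := by have := j'.isLt; omega
    have h2 := H j
    rw [dif_pos hj1] at h2
    have h3 : q (⟨(j : ℕ) + 1, hj1⟩ : Fin l) = q j' := by congr 1; ext; simp; omega
    omega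
  | succ d ih =>
    have hj'1 : (j : ℕ) + 1 + d < l := by have := j'.isLt; omega
    have h1 : q j + g j + 2 ≤ q ⟨(j : ℕ) + 1 + d, hj'1⟩ :=
      ih (j' := ⟨(j : ℕ) + 1 + d, hj'1⟩) (by simp; omega) (by simp)
    have hlt : ((⟨(j : ℕ) + 1 + d, hj'1⟩ : Fin l) : ℕ) + 1 < l := by
      simp; have := j'.isLt; omega
    have h2 := H ⟨(j : ℕ) + 1 + d, hj'1⟩
    rw [dif_pos hlt] at h2
    have heq : q ⟨((⟨(j : ℕ) + 1 + d, hj'1⟩ : Fin l) : ℕ) + 1, hlt⟩ = q j' := by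
      congr 1; ext; simp; omega
    omega

lemma StepHyp.q_le_N (H : StepHyp l N q g) (j : Fin l) : q j + g j + 2 ≤ N := by
  have key : ∀ m : ℕ, ∀ j' : Fin l, l - (j' : ℕ) ≤ m → q j' + g j' + 2 ≤ N := by
    intro m
    induction m with
    | zero => intro j' hj'; have := j'.isLt; omega
    | succ m ih =>
      intro j' _
      by_cases hc : (j' : ℕ) + 1 < l
      · have h2 := H j'
        rw [dif_pos hc] at h2
        have h3 := ih ⟨(j' : ℕ) + 1, hc⟩ (by simp; omega)
        omega
      · have h2 := H j'; rw [dif_neg hc] at h2; omega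
  exact key l j (by omega)

lemma StepHyp.strictMono (H : StepHyp l N q g) : StrictMono q := fun j j' h => by
  have := H.le_of_lt (Fin.lt_iff_val_lt_val.mp h); omega

end NatSection

section NatSection
variable {l N k : ℕ} {q g : Fin l → ℕ}

lemma StepHyp.notMem_runs (H : StepHyp l N q g) {μ : Fin l → ℕ} (hμ : ∀ j, μ j ≤ g j)
    {j : Fin l} {c : ℕ} (hc1 : μ j < c) (hc2 : c ≤ g j + 1) : q j + c ∉ runs l q μ := by
  rw [mem_runs]
  rintro ⟨j', h1, h2⟩
  rcases lt_trichotomy ((j' : ℕ)) ((j : ℕ)) with h | h | h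
  · have := H.le_of_lt h
    have := hμ j'
    omega
  · have : j' = j := Fin.ext h
    subst this; omega
  · have := H.le_of_lt h
    have := hμ j
    omega

lemma StepHyp.runs_subset (H : StepHyp l N q g) {μ : Fin l → ℕ} (hμ : ∀ j, μ j ≤ g j) :
    runs l q μ ⊆ Finset.range (N - 1) := by
  intro a ha
  rw [mem_runs] at ha
  obtain ⟨j, h1, h2⟩ := ha
  have := H.q_le_N j
  have := hμ j
  rw [Finset.mem_range]
  omega

lemma StepHyp.card_runs (H : StepHyp l N q g) {μ : Fin l → ℕ} (hμ : ∀ j, μ j ≤ g j) :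
    (runs l q μ).card = ∑ j, (μ j + 1) := by
  rw [runs, Finset.card_biUnion]
  · refine Finset.sum_congr rfl fun j _ => ?_
    rw [Nat.card_Icc]; omega
  · intro j _ j' _ hjj'
    rcases lt_or_gt_of_ne (fun h : (j : ℕ) = (j' : ℕ) => hjj' (Fin.ext h)) with h | h
    · apply Finset.disjoint_left.mpr
      intro a ha ha'
      rw [Finset.mem_Icc] at ha ha'
      have := H.le_of_lt h; have := hμ j; omega
    · apply Finset.disjoint_left.mpr
      intro a ha ha'
      rw [Finset.mem_Icc] at ha ha'
      have := H.le_of_lt h; have := hμ j'; omega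

lemma StepHyp.natLE_runs (H : StepHyp l N q g) (hq0 : ∃ j0 : Fin l, q j0 = 0)
    {μ : Fin l → ℕ} (hμ : ∀ j, μ j ≤ g j) :
    natLE (runs l q μ) = Finset.univ.image q := by
  obtain ⟨j0, hj0⟩ := hq0
  ext a
  simp only [natLE, Finset.mem_filter, Finset.mem_image, Finset.mem_univ, true_and]
  constructor
  · rintro ⟨ha, h0⟩
    rw [mem_runs] at ha
    obtain ⟨j, h1, h2⟩ := ha
    refine ⟨j, ?_⟩
    by_contra hne
    have hgt : q j < a := lt_of_le_of_ne h1 (fun h => hne h)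
    have : a - 1 ∈ runs l q μ := by
      rw [mem_runs]; exact ⟨j, by omega, by omega⟩
    rcases h0 with h0 | h0
    · omega
    · exact h0 this
  · rintro ⟨j, rfl⟩
    refine ⟨mem_runs.mpr ⟨j, le_refl _, by omega⟩, ?_⟩
    by_cases hj : q j = 0
    · exact Or.inl hj
    · right
      rw [mem_runs]
      rintro ⟨j', h1, h2⟩
      have hjj0 : (j0 : ℕ) < (j : ℕ) := by
        by_contra hcon
        rcases Nat.lt_or_ge (j : ℕ) (j0 : ℕ) with h | h
        · have := H.le_of_lt h; omega
        · have : j = j0 := Fin.ext (by omega); subst this; omega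
      have hq2 : 2 ≤ q j := by have := H.le_of_lt hjj0; omega
      rcases lt_trichotomy ((j' : ℕ)) ((j : ℕ)) with h | h | h
      · have := H.le_of_lt h; have := hμ j'; omega
      · have : j' = j := Fin.ext h; subst this; omega
      · have := H.le_of_lt h; omega

lemma StepHyp.runs_injOn (H : StepHyp l N q g) {μ μ' : Fin l → ℕ}
    (hμ : ∀ j, μ j ≤ g j) (hμ' : ∀ j, μ' j ≤ g j) (heq : runs l q μ = runs l q μ') :
    μ = μ' := by
  by_contra hne
  have key : ∀ (ν ν' : Fin l → ℕ), (∀ j, ν j ≤ g j) → (∀ j, ν' j ≤ g j) →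
      runs l q ν = runs l q ν' → ∀ j, ¬ (ν j < ν' j) := by
    intro ν ν' hν hν' h j hlt
    have h1 : q j + (ν j + 1) ∈ runs l q ν' := mem_runs.mpr ⟨j, by omega, by omega⟩
    have h2 : q j + (ν j + 1) ∉ runs l q ν :=
      H.notMem_runs hν (by omega) (by have := hν' j; omega)
    rw [h] at h2; exact h2 h1
  apply hne
  funext j
  have h1 := key μ μ' hμ hμ' heq j
  have h2 := key μ' μ hμ' hμ heq.symm j
  omega

lemma StepHyp.exists_runs_eq (H : StepHyp l N q g) (hl : 0 < l) (hq0 : q ⟨0, hl⟩ = 0)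
    {P : Finset ℕ} (hP : P ⊆ Finset.range (N - 1)) (hLE : natLE P = Finset.univ.image q) :
    (∀ j, runLen P (q j) - 1 ≤ g j) ∧ runs l q (fun j => runLen P (q j) - 1) = P := by
  have hqLE : ∀ j, q j ∈ natLE P := by
    intro j; rw [hLE]; exact Finset.mem_image_of_mem q (Finset.mem_univ j)
  have hqP : ∀ j, q j ∈ P := fun j => Finset.mem_of_mem_filter _ (hqLE j)
  have hPlt : ∀ a ∈ P, a < N - 1 := fun a ha => Finset.mem_range.mp (hP ha)
  set μ : Fin l → ℕ := fun j => runLen P (q j) - 1 with hμdef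
  have hrl : ∀ j, runLen P (q j) = μ j + 1 := by
    intro j; have := runLen_pos (hqP j); simp only [hμdef]; omega
  have hμg : ∀ j, μ j ≤ g j := by
    intro j
    have hnot : q j + (g j + 1) ∉ P := by
      have h2 := H j
      by_cases hc : (j : ℕ) + 1 < l
      · rw [dif_pos hc] at h2
        have hmem := hqLE ⟨(j : ℕ) + 1, hc⟩
        simp only [natLE, Finset.mem_filter] at hmem
        have hpos : 2 ≤ q ⟨(j : ℕ) + 1, hc⟩ := by
          have := H.le_of_lt (j := j) (j' := ⟨(j : ℕ) + 1, hc⟩) (by simp); omega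
        rcases hmem.2 with h0 | h0
        · omega
        · intro hcon; apply h0; convert hcon using 1; omega
      · rw [dif_neg hc] at h2
        intro hcon; have := hPlt _ hcon; omega
    have := runLen_le hnot
    have := hrl j
    omega
  refine ⟨hμg, ?_⟩
  apply Finset.Subset.antisymm
  · intro a ha
    rw [mem_runs] at ha
    obtain ⟨j, h1, h2⟩ := ha
    have : a = q j + (a - q j) := by omega
    rw [this]
    exact runLen_min (by rw [hrl]; omega)
  · intro a
    induction a using Nat.strong_induction_on with
    | _ a ih =>
      intro ha
      by_cases hle : a ∈ natLE P
      · rw [hLE] at hle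
        obtain ⟨j, _, hj⟩ := Finset.mem_image.mp hle
        exact mem_runs.mpr ⟨j, by omega, by omega⟩
      · have hcond : ¬ (a = 0 ∨ a - 1 ∉ P) := by
          intro hcon; exact hle (Finset.mem_filter.mpr ⟨ha, hcon⟩)
        push_neg at hcond
        obtain ⟨ha0, ha1⟩ := hcond
        have hb := ih (a - 1) (by omega) ha1
        rw [mem_runs] at hb
        obtain ⟨j, h1, h2⟩ := hb
        refine mem_runs.mpr ⟨j, by omega, ?_⟩
        by_contra hcon
        have : a = q j + runLen P (q j) := by rw [hrl]; omega
        rw [this] at ha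
        exact runLen_spec P (q j) ha

end NatSection


section ZModSec
variable {n : ℕ} [NeZero n] (c : ZMod n)

lemma ord_lt (x : ZMod n) : ord c x < n := ZMod.val_lt _

lemma add_ord (x : ZMod n) : c + (ord c x : ℕ) = x := by
  rw [ord, ZMod.natCast_zmod_val]; ring

lemma ord_add (a : ℕ) : ord c (c + (a : ℕ)) = a % n := by
  rw [ord, add_sub_cancel_left, ZMod.val_natCast]

lemma ord_add_of_lt {a : ℕ} (h : a < n) : ord c (c + (a : ℕ)) = a := by
  rw [ord_add, Nat.mod_eq_of_lt h]

lemma emb_inj {a b : ℕ} (ha : a < n) (hb : b < n) (h : c + (a : ℕ) = c + (b : ℕ)) : a = b := by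
  have := congrArg (ord c) h
  rwa [ord_add_of_lt c ha, ord_add_of_lt c hb] at this

/-- any finset is the image of its ord-image -/
lemma image_ord_image (S : Finset (ZMod n)) :
    (S.image (ord c)).image (fun a : ℕ => c + (a : ZMod n)) = S := by
  rw [Finset.image_image]
  conv_rhs => rw [← Finset.image_id (s := S)]
  refine Finset.image_congr fun x _ => ?_
  simp [Function.comp, add_ord, id]

lemma ord_image_image {P : Finset ℕ} (hP : P ⊆ Finset.range n) :
    ((P.image fun a : ℕ => c + (a : ZMod n)).image (ord c)) = P := by
  rw [Finset.image_image]
  conv_rhs => rw [← Finset.image_id (s := P)]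
  refine Finset.image_congr fun a ha => ?_
  have := Finset.mem_range.mp (hP ha)
  simp [Function.comp, ord_add_of_lt c this, id]

lemma card_image_emb {P : Finset ℕ} (hP : P ⊆ Finset.range n) :
    (P.image fun a : ℕ => c + (a : ZMod n)).card = P.card := by
  rw [Finset.card_image_of_injOn]
  intro a ha b hb h
  exact emb_inj c (Finset.mem_range.mp (hP ha)) (Finset.mem_range.mp (hP hb)) h

lemma mem_image_emb_iff {P : Finset ℕ} (hP : P ⊆ Finset.range n) {a : ℕ} (ha : a < n) :
    (c + (a : ZMod n) ∈ P.image fun b : ℕ => c + (b : ZMod n)) ↔ a ∈ P := by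
  constructor
  · intro h
    obtain ⟨b, hb, hba⟩ := Finset.mem_image.mp h
    rwa [← emb_inj c (Finset.mem_range.mp (hP hb)) ha hba]
  · exact fun h => Finset.mem_image_of_mem _ h

lemma leftEnd_image_emb (hn : 1 ≤ n) {P : Finset ℕ} (hP : P ⊆ Finset.range (n - 1)) :
    leftEnd (P.image fun a : ℕ => c + (a : ZMod n)) = (natLE P).image fun a : ℕ => c + (a : ZMod n) := by
  have hPn : P ⊆ Finset.range n := hP.trans (Finset.range_subset_range.mpr (by omega))
  have hnotlast : (n - 1) ∉ P := fun h => by have := Finset.mem_range.mp (hP h); omega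
  ext x
  simp only [leftEnd, Finset.mem_filter, natLE, Finset.mem_image, Finset.mem_filter]
  constructor
  · rintro ⟨hx, hx1⟩
    obtain ⟨a, ha, rfl⟩ := hx
    refine ⟨a, ⟨ha, ?_⟩, rfl⟩
    by_cases ha0 : a = 0
    · exact Or.inl ha0
    · right
      intro hcon
      apply hx1
      have : c + (a : ℕ) - 1 = c + ((a - 1 : ℕ) : ℕ) := by
        push_cast [Nat.cast_sub (by omega : 1 ≤ a)]; ring
      rw [this]
      exact ⟨a - 1, hcon, rfl⟩
  · rintro ⟨a, ⟨ha, hcond⟩, rfl⟩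
    refine ⟨⟨a, ha, rfl⟩, ?_⟩
    rcases hcond with ha0 | ha1
    · subst ha0
      intro hcon
      have : c + ((0 : ℕ) : ZMod n) - 1 = c + ((n - 1 : ℕ) : ℕ) := by
        push_cast [Nat.cast_sub (by omega : 1 ≤ n)]
        simp
        ring
      rw [this] at hcon
      exact hnotlast ((mem_image_emb_iff c hPn (by omega)).mp (Finset.mem_image.mpr hcon))
    · intro hcon
      have ha0 : a ≠ 0 := by
        intro h; subst h; simp at ha1; exact ha1 ha
      have : c + (a : ℕ) - 1 = c + ((a - 1 : ℕ) : ℕ) := by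
        push_cast [Nat.cast_sub (by omega : 1 ≤ a)]; ring
      rw [this] at hcon
      have halt : a - 1 < n := by have := Finset.mem_range.mp (hP ha); omega
      exact ha1 ((mem_image_emb_iff c hPn halt).mp (Finset.mem_image.mpr hcon))

end ZModSec


section Dec
variable {n : ℕ} [NeZero n]

lemma ord_injective (c : ZMod n) : Function.Injective (ord c) := by
  intro x y h
  have := congrArg (fun a : ℕ => c + (a : ZMod n)) h
  simpa [add_ord] using this

lemma decode (hl : 2 ≤ l) (hn : 2 * l ≤ n) (i : ZMod n)
    (T : Finset (ZMod n)) (hcard : T.card = l)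
    (hadj : ∀ x ∈ T, x + 1 ∉ T)
    (hsum : (phi i T).sum = n - 2 * l) :
    ∃ (c : ZMod n) (q g : Fin l → ℕ),
      q ⟨0, by omega⟩ = 0 ∧ (∀ j, q j < n) ∧ StepHyp l n q g ∧
      phi i T = List.ofFn g ∧
      T = Finset.univ.image (fun j => c + ((q j : ℕ) : ZMod n)) := by
  have hl0 : 0 < l := by omega
  set A := T.image (ord i) with hA
  have hAcard : A.card = l := by
    rw [hA, Finset.card_image_of_injective _ (ord_injective i), hcard]
  set ts := A.sort (· ≤ ·) with hts
  have hlen : ts.length = l := by rw [hts, Finset.length_sort, hAcard]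
  have hsorted : ts.SortedLT := Finset.sortedLT_sort A
  set p : Fin l → ℕ := fun j => ts.get (Fin.cast hlen.symm j) with hp
  have hmono : StrictMono p := fun j j' h =>
    hsorted.strictMono_get (by simp only [Fin.lt_iff_val_lt_val, Fin.coe_cast]; exact h)
  have hpA : ∀ j, p j ∈ A := by
    intro j
    have hmem : p j ∈ ts := by rw [hp]; apply List.get_mem
    rwa [hts, Finset.mem_sort] at hmem
  have hplt : ∀ j, p j < n := by
    intro j
    obtain ⟨x, -, hx⟩ := Finset.mem_image.mp (hpA j)
    rw [← hx]; exact ord_lt i x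
  have hAp : A = Finset.univ.image p := by
    ext a
    constructor
    · intro ha
      have hmem : a ∈ ts := by rw [hts, Finset.mem_sort]; exact ha
      obtain ⟨jj, hj⟩ := List.mem_iff_get.mp hmem
      refine Finset.mem_image.mpr ⟨Fin.cast hlen jj, Finset.mem_univ _, ?_⟩
      rw [hp]; simpa using hj
    · intro ha
      obtain ⟨j, -, rfl⟩ := Finset.mem_image.mp ha
      exact hpA j
  have hT : T = Finset.univ.image (fun j : Fin l => i + ((p j : ℕ) : ZMod n)) := by
    conv_lhs => rw [← image_ord_image i T, ← hA, hAp, Finset.image_image]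
    rfl
  have hg0lt : ∀ j : Fin l, ((j : ℕ) + 1) % l < l := fun j => Nat.mod_lt _ hl0
  set g0 : Fin l → ℕ :=
    fun j => (p ⟨((j : ℕ) + 1) % l, hg0lt j⟩ + n - p j - 2) % n with hg0
  have hphi : phi i T = List.ofFn g0 := by
    have e : phi i T = (ts.zip (ts.rotate 1)).map fun pr => (pr.2 + n - pr.1 - 2) % n := rfl
    have hlen2 : (phi i T).length = l := by
      rw [e, List.length_map, List.length_zip, List.length_rotate, hlen]
      simp
    apply List.ext_getElem (by rw [hlen2, List.length_ofFn])
    intro m h1 h2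
    have hm : m < l := by rwa [hlen2] at h1
    have htsl : m < ts.length := by rw [hlen]; exact hm
    have hrot : m < (ts.rotate 1).length := by rwa [List.length_rotate]
    have hzip : m < (ts.zip (ts.rotate 1)).length := by
      rw [List.length_zip]; exact lt_min htsl hrot
    rw [List.getElem_ofFn]
    rw [List.getElem_of_eq e h1, List.getElem_map, List.getElem_zip, List.getElem_rotate]
    simp only [hg0, hp]
    have hmm : ∀ (h : m < ts.length), ts[m]'h = ts.get (Fin.cast hlen.symm ⟨m, hm⟩) := by
      intro h; rfl
    have hmm2 : ∀ (h : (m + 1) % ts.length < ts.length),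
        ts[(m + 1) % ts.length]'h = ts.get (Fin.cast hlen.symm ⟨(m + 1) % l, hg0lt ⟨m, hm⟩⟩) := by
      intro h
      have : (m + 1) % ts.length = (m + 1) % l := by rw [hlen]
      simp only [List.get_eq_getElem, Fin.coe_cast]
      congr 1
    rw [hmm, hmm2]
  have hsum0 : ∑ j, g0 j = n - 2 * l := by rw [← hsum, hphi, List.sum_ofFn]
  have hle : ∀ j, g0 j ≤ n - 2 * l := by
    intro j
    rw [← hsum0]
    exact Finset.single_le_sum (fun _ _ => Nat.zero_le _) (Finset.mem_univ j)
  have hstep' : ∀ j : Fin l, p j + g0 j + 2 =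
      if h : (j : ℕ) + 1 < l then p ⟨(j : ℕ) + 1, h⟩ else p ⟨0, hl0⟩ + n := by
    intro j
    by_cases hc : (j : ℕ) + 1 < l
    · rw [dif_pos hc]
      have hD : p j < p ⟨(j : ℕ) + 1, hc⟩ := hmono (by simp [Fin.lt_iff_val_lt_val])
      have hb : p ⟨(j : ℕ) + 1, hc⟩ < n := hplt _
      have hgj : g0 j = (p ⟨(j : ℕ) + 1, hc⟩ + n - p j - 2) % n := by
        simp only [hg0, Nat.mod_eq_of_lt hc]
      set b := p ⟨(j : ℕ) + 1, hc⟩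
      set a := p j
      rcases Nat.lt_or_ge (b - a) 2 with hD2 | hD2
      · -- b = a + 1 : entry is n - 1, too big
        exfalso
        have hb1 : b = a + 1 := by omega
        have : g0 j = n - 1 := by
          rw [hgj, hb1]
          have : a + 1 + n - a - 2 = n - 1 := by omega
          rw [this, Nat.mod_eq_of_lt (by omega)]
        have := hle j
        omega
      · have : g0 j = b - a - 2 := by
          rw [hgj]
          have h3 : b + n - a - 2 = n + (b - a - 2) := by omega
          rw [h3, Nat.add_mod_left, Nat.mod_eq_of_lt (by omega)]
        omega
    · rw [dif_neg hc]
      have hjl : (j : ℕ) = l - 1 := by have := j.isLt; omega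
      have hmod : ((j : ℕ) + 1) % l = 0 := by
        rw [hjl, Nat.sub_add_cancel (by omega : 1 ≤ l), Nat.mod_self]
      have hab : p ⟨0, hl0⟩ < p j :=
        hmono (by simp [Fin.lt_iff_val_lt_val]; omega)
      have hgj : g0 j = (p ⟨0, hl0⟩ + n - p j - 2) % n := by
        simp only [hg0, hmod]
      set b := p ⟨0, hl0⟩
      set a := p j
      have ha : a < n := hplt j
      rcases Nat.lt_or_ge (b + n - a) 2 with hD2 | hD2
      · -- a = b + n - 1 : adjacency in T
        exfalso
        have hba : a = b + n - 1 := by omega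
        have hxT : i + ((a : ℕ) : ZMod n) ∈ T := by
          rw [hT]; exact Finset.mem_image.mpr ⟨j, Finset.mem_univ _, rfl⟩
        have hyT : i + ((b : ℕ) : ZMod n) ∈ T := by
          rw [hT]; exact Finset.mem_image.mpr ⟨⟨0, hl0⟩, Finset.mem_univ _, rfl⟩
        apply hadj _ hxT
        have : ((a : ℕ) : ZMod n) + 1 = ((b : ℕ) : ZMod n) := by
          have : ((a : ℕ) : ZMod n) = ((b + n - 1 : ℕ) : ZMod n) := by rw [← hba]
          rw [this]
          push_cast [Nat.cast_sub (by omega : 1 ≤ b + n)]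
          simp [ZMod.natCast_self]
        have hgoal : i + ((a : ℕ) : ZMod n) + 1 = i + ((b : ℕ) : ZMod n) := by
          rw [add_assoc, this]
        rw [hgoal]
        exact hyT
      · have : g0 j = b + n - a - 2 := by
          rw [hgj, Nat.mod_eq_of_lt (by omega)]
        omega
  set j0 : Fin l := ⟨0, hl0⟩ with hj0
  have hmono' : ∀ j : Fin l, p j0 ≤ p j := by
    intro j
    rcases Nat.eq_zero_or_pos (j : ℕ) with h | h
    · have : j = j0 := by ext; simp [hj0, h]
      rw [this]
    · exact le_of_lt (hmono (by rw [Fin.lt_iff_val_lt_val]; simpa [hj0] using h))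
  set q : Fin l → ℕ := fun j => p j - p j0 with hq
  have hqj : ∀ j, q j = p j - p j0 := fun _ => rfl
  refine ⟨i + ((p j0 : ℕ) : ZMod n), q, g0, by rw [hqj]; omega, ?_, ?_, hphi, ?_⟩
  · intro j; have := hplt j; rw [hqj]; omega
  · intro j
    have h1 := hstep' j
    rw [hqj j]
    by_cases hc : (j : ℕ) + 1 < l
    · rw [dif_pos hc] at h1 ⊢
      rw [hqj ⟨(j : ℕ) + 1, hc⟩]
      have := hmono' j
      have := hmono' ⟨(j : ℕ) + 1, hc⟩
      omega
    · rw [dif_neg hc] at h1 ⊢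
      have := hmono' j
      omega
  · rw [hT]
    refine Finset.image_congr fun j _ => ?_
    have h2 := hmono' j
    rw [hqj]
    push_cast [Nat.cast_sub h2]
    ring
end Dec



open Finset

/-- stars and bars via Sym -/
lemma choose_flip (l m : ℕ) (hl : 1 ≤ l) :
    (l + m - 1).choose m = (m + l - 1).choose (l - 1) := by
  have h3 : l + m - 1 = m + l - 1 := by omega
  have h2 : l - 1 = (m + l - 1) - m := by omega
  rw [h3, h2, Nat.choose_symm (by omega)]

lemma card_antidiagonalTuple (l m : ℕ) (hl : 1 ≤ l) :
    (Finset.Nat.antidiagonalTuple l m).card = (m + l - 1).choose (l - 1) := by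
  classical
  have keycard : ∀ (t : Finset (Fin l)) (f : Fin l → ℕ),
      Multiset.card (∑ i ∈ t, f i • ({i} : Multiset (Fin l))) = ∑ i ∈ t, f i := by
    intro t f
    induction t using Finset.cons_induction with
    | empty => simp
    | cons a t ha ih => simp [Finset.sum_cons, ih, Multiset.card_nsmul]
  have keycount : ∀ s : Multiset (Fin l), ∑ i, s.count i = Multiset.card s := by
    intro s
    have h := Finset.sum_subset (Finset.subset_univ s.toFinset)
      (f := fun i => Multiset.count i s) (fun i _ hi => by
        simpa using Multiset.count_eq_zero_of_notMem (by simpa using hi))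
    rw [← h, Multiset.toFinset_sum_count_eq]
  have keyrecon : ∀ s : Multiset (Fin l), ∑ i, s.count i • ({i} : Multiset (Fin l)) = s := by
    intro s
    have h := Finset.sum_subset (Finset.subset_univ s.toFinset)
      (f := fun i => Multiset.count i s • ({i} : Multiset (Fin l))) (fun i _ hi => by
        rw [Multiset.count_eq_zero_of_notMem (by simpa using hi), zero_smul])
    rw [← h, Multiset.toFinset_sum_count_nsmul_eq]
  have keycnt2 : ∀ (f : Fin l → ℕ) (i : Fin l),
      Multiset.count i (∑ x, f x • ({x} : Multiset (Fin l))) = f i := by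
    intro f i
    rw [Multiset.count_sum']
    simp only [Multiset.count_nsmul, Multiset.count_singleton, smul_eq_mul]
    rw [Finset.sum_eq_single i]
    · simp
    · intro b _ hb; simp [Ne.symm hb]
    · intro h; exact absurd (Finset.mem_univ i) h
  have hequiv : {f : Fin l → ℕ // ∑ i, f i = m} ≃ Sym (Fin l) m := by
    refine
      { toFun := fun f => ⟨∑ i, (f.1 i) • ({i} : Multiset (Fin l)), ?_⟩
        invFun := fun s => ⟨fun i => s.1.count i, ?_⟩
        left_inv := ?_
        right_inv := ?_ }
    · rw [keycard]; exact f.2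
    · obtain ⟨s, hs⟩ := s
      dsimp only
      rw [keycount]; exact hs
    · rintro ⟨f, hf⟩
      ext i
      exact keycnt2 f i
    · rintro ⟨s, hs⟩
      ext : 1
      exact keyrecon s
  letI : Fintype {f : Fin l → ℕ // ∑ i, f i = m} :=
    Fintype.ofFinset (Finset.Nat.antidiagonalTuple l m)
      (fun f => Finset.Nat.mem_antidiagonalTuple)
  have h1 : (Finset.Nat.antidiagonalTuple l m).card
      = Fintype.card {f : Fin l → ℕ // ∑ i, f i = m} :=
    (Fintype.card_of_subtype _ (fun f => Finset.Nat.mem_antidiagonalTuple)).symm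
  rw [h1, Fintype.card_congr hequiv, Sym.card_sym_eq_choose, Fintype.card_fin]
  exact choose_flip l m hl

lemma sum_filter_le_card (l a b : ℕ) :
    ∑ L ∈ Finset.Nat.antidiagonalTuple l (a + b),
        ((Finset.Nat.antidiagonalTuple l a).filter fun μ => ∀ j, μ j ≤ L j).card
      = (Finset.Nat.antidiagonalTuple l a).card * (Finset.Nat.antidiagonalTuple l b).card := by
  classical
  rw [← Finset.card_sigma, ← Finset.card_product]
  refine Finset.card_bij' (fun x _ => (x.2, x.1 - x.2)) (fun y _ => ⟨y.1 + y.2, y.1⟩)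
    ?_ ?_ ?_ ?_
  · rintro ⟨L, μ⟩ hx
    dsimp only at *
    rw [Finset.mem_sigma] at hx
    obtain ⟨hL, hμ⟩ := hx
    rw [Finset.mem_filter] at hμ
    obtain ⟨hμa, hμle⟩ := hμ
    rw [Finset.Nat.mem_antidiagonalTuple] at hL hμa
    dsimp only at hL hμa hμle ⊢
    rw [Finset.mem_product]
    refine ⟨Finset.Nat.mem_antidiagonalTuple.mpr hμa, Finset.Nat.mem_antidiagonalTuple.mpr ?_⟩
    have : ∑ j, (L j - μ j) + ∑ j, μ j = ∑ j, L j := by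
      rw [← Finset.sum_add_distrib]
      exact Finset.sum_congr rfl fun j _ => by have := hμle j; omega
    dsimp only
    simp only [Pi.sub_apply]
    omega
  · rintro ⟨μ, ν⟩ hy
    dsimp only at *
    rw [Finset.mem_product] at hy
    obtain ⟨hμ, hν⟩ := hy
    rw [Finset.Nat.mem_antidiagonalTuple] at hμ hν
    dsimp only at hμ hν
    rw [Finset.mem_sigma]
    constructor
    · rw [Finset.Nat.mem_antidiagonalTuple]
      simp only [Pi.add_apply]
      rw [Finset.sum_add_distrib, hμ, hν]
    · rw [Finset.mem_filter]
      refine ⟨Finset.Nat.mem_antidiagonalTuple.mpr hμ, fun j => by simp⟩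
  · rintro ⟨L, μ⟩ hx
    dsimp only at *
    rw [Finset.mem_sigma] at hx
    obtain ⟨-, hμ⟩ := hx
    rw [Finset.mem_filter] at hμ
    have hle := hμ.2
    dsimp only at hle ⊢
    refine Sigma.ext ?_ (heq_of_eq ?_)
    · funext j
      dsimp only
      simp only [Pi.add_apply, Pi.sub_apply]
      have := hle j
      omega
    · rfl
  · rintro ⟨μ, ν⟩ _
    dsimp only
    refine Prod.ext rfl ?_
    funext j
    simp only [Pi.sub_apply, Pi.add_apply]
    omega


/-- A slice: a non-intertwining collection of `C(n-l-1, l-1)` `l`-subsets of `ℤ/n`, each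
with cyclic gaps at least 2, such that for some `i` the gap-vector map `φᵢ` is a bijection
onto the `l`-tuples of nonnegative integers summing to `n - 2l`. -/
def IsSlice (n l : ℕ) (𝒯 : Finset (Finset (ZMod n))) : Prop :=
  𝒯.card = (n - l - 1).choose (l - 1) ∧
    (∀ T ∈ 𝒯, T.card = l) ∧
    (∀ T ∈ 𝒯, ∀ x ∈ T, x + 1 ∉ T) ∧
    (∀ T ∈ 𝒯, ∀ T' ∈ 𝒯, ¬ CycIntertwines T T') ∧
    ∃ i : ZMod n, Set.BijOn (phi i) ↑𝒯
      {L : List ℕ | L.length = l ∧ L.sum = n - 2 * l}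

/-- `C_k(𝒯)`: the `k`-subsets of `ℤ/n` which are `l`-ple intervals whose set of left
endpoints belongs to `𝒯`. -/
def Ck (n k : ℕ) (𝒯 : Finset (Finset (ZMod n))) : Set (Finset (ZMod n)) :=
  {S : Finset (ZMod n) | S.card = k ∧ leftEnd S ∈ 𝒯}

/-- Theorem 3.8 (cardinality): if `𝒯` is a slice of `l`-subsets of `[n]` and
`l ≤ k ≤ n - l`, then `C_k(𝒯)` has exactly `C(k-1, l-1) * C(n-k-1, l-1)` elements. -/
theorem card_Ck_of_slice (n l k : ℕ) (hn : 0 < n) (hl : 2 ≤ l) (hlk : l ≤ k)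
    (hkn : k ≤ n - l) (𝒯 : Finset (Finset (ZMod n))) (h𝒯 : IsSlice n l 𝒯) :
    (Ck n k 𝒯).ncard = (k - 1).choose (l - 1) * (n - k - 1).choose (l - 1) := by
  classical
  haveI : NeZero n := ⟨hn.ne'⟩
  obtain ⟨hTcard, hTl, hTadj, hTint, i, hbij⟩ := h𝒯
  have hn2l : 2 * l ≤ n := by omega
  have hl0 : 0 < l := by omega
  -- the canonical gap tuple of a member of the slice
  set gT : Finset (ZMod n) → (Fin l → ℕ) := fun T j => (phi i T).getD (j : ℕ) 0 with hgTdef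
  -- decode each slice member
  have hdec : ∀ T ∈ 𝒯, ∃ (c : ZMod n) (q : Fin l → ℕ),
      q ⟨0, hl0⟩ = 0 ∧ (∀ j, q j < n) ∧ StepHyp l n q (gT T) ∧
      phi i T = List.ofFn (gT T) ∧
      T = Finset.univ.image (fun j => c + ((q j : ℕ) : ZMod n)) := by
    intro T hT
    have hmem := hbij.mapsTo (Finset.mem_coe.mpr hT)
    obtain ⟨hlen, hsum⟩ := hmem
    obtain ⟨c, q, g, hq0, hqlt, hstep, hphi, hTimg⟩ :=
      decode hl hn2l i T (hTl T hT) (hTadj T hT) hsum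
    have hg : gT T = g := by
      funext j
      rw [hgTdef]
      simp only
      rw [hphi, List.getD_eq_getElem _ _ (by rw [List.length_ofFn]; exact j.isLt),
        List.getElem_ofFn]
    rw [hg]
    exact ⟨c, q, hq0, hqlt, hstep, hphi, hTimg⟩
  -- Ck as a finset
  have hCk : Ck n k 𝒯 =
      ↑((Finset.univ : Finset (Finset (ZMod n))).filter
        fun S => S.card = k ∧ leftEnd S ∈ 𝒯) := by
    ext S
    simp [Ck]
  rw [hCk, Set.ncard_coe_finset]
  rw [Finset.card_eq_sum_card_fiberwise (f := leftEnd) (t := 𝒯)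
    (fun S hS => (Finset.mem_filter.mp hS).2.2)]
  -- per-fiber count
  have hmain : ∀ T ∈ 𝒯,
      ((Finset.univ.filter fun S : Finset (ZMod n) => S.card = k ∧ leftEnd S ∈ 𝒯).filter
        fun S => leftEnd S = T).card
      = ((Finset.Nat.antidiagonalTuple l (k - l)).filter
          fun μ => ∀ j, μ j ≤ gT T j).card := by
    intro T hT
    obtain ⟨c, q, hq0, hqlt, hstep, hphi, hTimg⟩ := hdec T hT
    set g := gT T
    have hAeq : ((Finset.univ.filter fun S : Finset (ZMod n) =>
        S.card = k ∧ leftEnd S ∈ 𝒯).filter fun S => leftEnd S = T)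
        = Finset.univ.filter fun S : Finset (ZMod n) => S.card = k ∧ leftEnd S = T := by
      ext S
      simp only [Finset.mem_filter, Finset.mem_univ, true_and]
      constructor
      · rintro ⟨⟨h1, -⟩, h2⟩; exact ⟨h1, h2⟩
      · rintro ⟨h1, h2⟩; exact ⟨⟨h1, h2 ▸ hT⟩, h2⟩
    rw [hAeq]
    symm
    refine Finset.card_bij'
      (fun μ _ => (runs l q μ).image (fun a : ℕ => c + (a : ZMod n)))
      (fun S _ => fun j => runLen (S.image (ord c)) (q j) - 1) ?_ ?_ ?_ ?_
    -- forward maps into fibre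
    · intro μ hμ
      rw [Finset.mem_filter] at hμ
      obtain ⟨hμs, hμle⟩ := hμ
      rw [Finset.Nat.mem_antidiagonalTuple] at hμs
      have hruns1 : runs l q μ ⊆ Finset.range (n - 1) := hstep.runs_subset hμle
      have hrunsn : runs l q μ ⊆ Finset.range n :=
        hruns1.trans (Finset.range_subset_range.mpr (by omega))
      rw [Finset.mem_filter]
      refine ⟨Finset.mem_univ _, ?_, ?_⟩
      · rw [card_image_emb c hrunsn, hstep.card_runs hμle, Finset.sum_add_distrib]
        simp only [hμs, Finset.sum_const, Finset.card_univ, Fintype.card_fin,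
          smul_eq_mul, mul_one]
        omega

      · rw [leftEnd_image_emb c (by omega) hruns1,
          hstep.natLE_runs ⟨⟨0, hl0⟩, hq0⟩ hμle, Finset.image_image, hTimg]
        rfl
    -- backward maps into tuple set
    · intro S hS
      rw [Finset.mem_filter] at hS
      obtain ⟨-, hScard, hSLE⟩ := hS
      set P := S.image (ord c) with hP
      have hPn : P ⊆ Finset.range n := fun a ha => by
        obtain ⟨x, -, rfl⟩ := Finset.mem_image.mp ha
        exact Finset.mem_range.mpr (ord_lt c x)
      have hcT : c ∈ T := by
        rw [hTimg]
        refine Finset.mem_image.mpr ⟨⟨0, hl0⟩, Finset.mem_univ _, ?_⟩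
        rw [hq0]
        simp
      have hc1 : c - 1 ∉ S := by
        have := hSLE ▸ hcT
        exact (Finset.mem_filter.mp this).2
      have hPn1 : P ⊆ Finset.range (n - 1) := by
        intro a ha
        have han := Finset.mem_range.mp (hPn ha)
        rw [Finset.mem_range]
        rcases Nat.lt_or_ge a (n - 1) with h | h
        · exact h
        · exfalso
          have han1 : a = n - 1 := by omega
          obtain ⟨x, hx, hxa⟩ := Finset.mem_image.mp ha
          have : x = c + ((a : ℕ) : ZMod n) := by rw [← hxa, add_ord]
          rw [this, han1] at hx
          have : c + (((n - 1 : ℕ) : ℕ) : ZMod n) = c - 1 := by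
            push_cast [Nat.cast_sub (by omega : 1 ≤ n)]
            simp [ZMod.natCast_self]
            ring
          rw [this] at hx
          exact hc1 hx
      have hSP : S = P.image (fun a : ℕ => c + (a : ZMod n)) := (image_ord_image c S).symm
      have hnatLE : natLE P = Finset.univ.image q := by
        have h1 : leftEnd S = (natLE P).image (fun a : ℕ => c + (a : ZMod n)) := by
          conv_lhs => rw [hSP]
          exact leftEnd_image_emb c (by omega) hPn1
        have h2 : (natLE P).image (fun a : ℕ => c + (a : ZMod n))
            = (Finset.univ.image q).image (fun a : ℕ => c + (a : ZMod n)) := by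
          rw [← h1, hSLE, hTimg, Finset.image_image]
          rfl
        have hsub1 : natLE P ⊆ Finset.range n :=
          (Finset.filter_subset _ _).trans hPn
        have hsub2 : Finset.univ.image q ⊆ Finset.range n := by
          intro a ha
          obtain ⟨j, -, rfl⟩ := Finset.mem_image.mp ha
          exact Finset.mem_range.mpr (hqlt j)
        have := congrArg (fun W => W.image (ord c)) h2
        simpa [ord_image_image c hsub1, ord_image_image c hsub2] using this
      obtain ⟨hμle, hruns⟩ := hstep.exists_runs_eq hl0 hq0 hPn1 hnatLE
      rw [Finset.mem_filter]
      refine ⟨?_, hμle⟩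
      rw [Finset.Nat.mem_antidiagonalTuple]
      have hcardP : P.card = k := by
        rw [hP, Finset.card_image_of_injective _ (ord_injective c), hScard]
      have := hstep.card_runs hμle
      rw [hruns, hcardP, Finset.sum_add_distrib] at this
      simp at this
      omega
    -- left inverse
    · intro μ hμ
      rw [Finset.mem_filter] at hμ
      obtain ⟨-, hμle⟩ := hμ
      have hruns1 : runs l q μ ⊆ Finset.range (n - 1) := hstep.runs_subset hμle
      have hrunsn : runs l q μ ⊆ Finset.range n :=
        hruns1.trans (Finset.range_subset_range.mpr (by omega))
      have hLE : natLE (runs l q μ) = Finset.univ.image q :=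
        hstep.natLE_runs ⟨⟨0, hl0⟩, hq0⟩ hμle
      obtain ⟨hμle2, hruns2⟩ := hstep.exists_runs_eq hl0 hq0 hruns1 hLE
      have hPP : ((runs l q μ).image (fun a : ℕ => c + (a : ZMod n))).image (ord c)
          = runs l q μ := ord_image_image c hrunsn
      rw [hPP]
      exact hstep.runs_injOn hμle2 hμle hruns2
    -- right inverse
    · intro S hS
      rw [Finset.mem_filter] at hS
      obtain ⟨-, hScard, hSLE⟩ := hS
      set P := S.image (ord c) with hP
      have hPn : P ⊆ Finset.range n := fun a ha => by
        obtain ⟨x, -, rfl⟩ := Finset.mem_image.mp ha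
        exact Finset.mem_range.mpr (ord_lt c x)
      have hcT : c ∈ T := by
        rw [hTimg]
        refine Finset.mem_image.mpr ⟨⟨0, hl0⟩, Finset.mem_univ _, ?_⟩
        rw [hq0]
        simp
      have hc1 : c - 1 ∉ S := by
        have := hSLE ▸ hcT
        exact (Finset.mem_filter.mp this).2
      have hPn1 : P ⊆ Finset.range (n - 1) := by
        intro a ha
        have han := Finset.mem_range.mp (hPn ha)
        rw [Finset.mem_range]
        rcases Nat.lt_or_ge a (n - 1) with h | h
        · exact h
        · exfalso
          have han1 : a = n - 1 := by omega
          obtain ⟨x, hx, hxa⟩ := Finset.mem_image.mp ha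
          have : x = c + ((a : ℕ) : ZMod n) := by rw [← hxa, add_ord]
          rw [this, han1] at hx
          have : c + (((n - 1 : ℕ) : ℕ) : ZMod n) = c - 1 := by
            push_cast [Nat.cast_sub (by omega : 1 ≤ n)]
            simp [ZMod.natCast_self]
            ring
          rw [this] at hx
          exact hc1 hx
      have hSP : S = P.image (fun a : ℕ => c + (a : ZMod n)) := (image_ord_image c S).symm
      have hnatLE : natLE P = Finset.univ.image q := by
        have h1 : leftEnd S = (natLE P).image (fun a : ℕ => c + (a : ZMod n)) := by
          conv_lhs => rw [hSP]
          exact leftEnd_image_emb c (by omega) hPn1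
        have h2 : (natLE P).image (fun a : ℕ => c + (a : ZMod n))
            = (Finset.univ.image q).image (fun a : ℕ => c + (a : ZMod n)) := by
          rw [← h1, hSLE, hTimg, Finset.image_image]
          rfl
        have hsub1 : natLE P ⊆ Finset.range n :=
          (Finset.filter_subset _ _).trans hPn
        have hsub2 : Finset.univ.image q ⊆ Finset.range n := by
          intro a ha
          obtain ⟨j, -, rfl⟩ := Finset.mem_image.mp ha
          exact Finset.mem_range.mpr (hqlt j)
        have := congrArg (fun W => W.image (ord c)) h2
        simpa [ord_image_image c hsub1, ord_image_image c hsub2] using this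
      obtain ⟨hμle, hruns⟩ := hstep.exists_runs_eq hl0 hq0 hPn1 hnatLE
      rw [hruns]
      exact hSP.symm
  rw [Finset.sum_congr rfl hmain]
  -- change the summation index via the slice bijection
  have hsum_eq : ∑ T ∈ 𝒯, ((Finset.Nat.antidiagonalTuple l (k - l)).filter
        fun μ => ∀ j, μ j ≤ gT T j).card
      = ∑ L ∈ Finset.Nat.antidiagonalTuple l (n - 2 * l),
          ((Finset.Nat.antidiagonalTuple l (k - l)).filter
            fun μ => ∀ j, μ j ≤ L j).card := by
    refine Finset.sum_bij (fun T _ => gT T) ?_ ?_ ?_ ?_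
    · intro T hT
      obtain ⟨c, q, hq0, hqlt, hstep, hphi, hTimg⟩ := hdec T hT
      rw [Finset.Nat.mem_antidiagonalTuple]
      have h1 : (phi i T).sum = n - 2 * l := (hbij.mapsTo (Finset.mem_coe.mpr hT)).2
      rw [hphi, List.sum_ofFn] at h1
      exact h1
    · intro T hT T' hT' heq
      obtain ⟨-, -, -, -, -, hphi, -⟩ := hdec T hT
      obtain ⟨-, -, -, -, -, hphi', -⟩ := hdec T' hT'
      have : phi i T = phi i T' := by rw [hphi, hphi', heq]
      exact hbij.injOn (Finset.mem_coe.mpr hT) (Finset.mem_coe.mpr hT') this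
    · intro L hL
      rw [Finset.Nat.mem_antidiagonalTuple] at hL
      have hmem : List.ofFn L ∈ {L : List ℕ | L.length = l ∧ L.sum = n - 2 * l} := by
        constructor
        · rw [List.length_ofFn]
        · rw [List.sum_ofFn]; exact hL
      obtain ⟨T, hT, hphiT⟩ := hbij.surjOn hmem
      refine ⟨T, Finset.mem_coe.mp hT, ?_⟩
      obtain ⟨-, -, -, -, -, hphi, -⟩ := hdec T (Finset.mem_coe.mp hT)
      rw [hphiT] at hphi
      exact (List.ofFn_inj.mp hphi.symm)
    · intro T hT
      rfl
  rw [hsum_eq]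
  clear hsum_eq hmain
  have e1 : n - 2 * l = (k - l) + (n - k - l) := by omega
  have e2 : k - l + l - 1 = k - 1 := by omega
  have e3 : n - k - l + l - 1 = n - k - 1 := by omega
  have e4 : 1 ≤ l := by omega
  rw [e1, sum_filter_le_card l (k - l) (n - k - l),
    card_antidiagonalTuple l (k - l) e4, card_antidiagonalTuple l (n - k - l) e4, e2, e3]
end

section
/- Elements of I_n^{l-1} \ Î_n^{l-1} do not intertwine any element of I_n^{l-1}: if I = (i_1,...,i_l) ∈ I_n^{l-1} satisfies i_l + 2 > i_1 + n, then for every J ∈ I_n^{l-1}, neither I intertwines J nor J intertwines I (under the cyclic order). -/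
private lemma mem_flat_left {LA LB : List ℕ} (h : LA.length = LB.length)
    {x : ℕ} (hx : x ∈ LA) :
    x ∈ (LA.zip LB).flatMap fun p => [p.1, p.2] := by
  obtain ⟨k, hk, rfl⟩ := List.getElem_of_mem hx
  have hk' : k < (LA.zip LB).length := by simp [List.length_zip]; omega
  refine List.mem_flatMap.2 ⟨(LA.zip LB)[k], List.getElem_mem hk', ?_⟩
  simp [List.getElem_zip]

private lemma mem_flat_right {LA LB : List ℕ} (h : LA.length = LB.length)
    {x : ℕ} (hx : x ∈ LB) :
    x ∈ (LA.zip LB).flatMap fun p => [p.1, p.2] := by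
  obtain ⟨k, hk, rfl⟩ := List.getElem_of_mem hx
  have hk' : k < (LA.zip LB).length := by simp [List.length_zip]; omega
  refine List.mem_flatMap.2 ⟨(LA.zip LB)[k], List.getElem_mem hk', ?_⟩
  simp [List.getElem_zip]

/-- In an intertwining chain, each element `a` of the first list has a partner `b` in the
second list with `a < b` which is below every element of the first list above `a`. -/
private lemma chainL1 : ∀ (LA LB : List ℕ), LA.length = LB.length →
    List.Chain' (· < ·) ((LA.zip LB).flatMap fun p => [p.1, p.2]) →
    ∀ a ∈ LA, ∃ b ∈ LB, a < b ∧ ∀ a' ∈ LA, a < a' → b < a'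
  | [], _, _, _, _, ha => absurd ha List.not_mem_nil
  | _ :: _, [], h, _, _, _ => by simp at h
  | a₀ :: LA', b₀ :: LB', h, hc, a, ha => by
    simp only [List.zip_cons_cons, List.flatMap_cons, List.cons_append, List.nil_append]
      at hc
    have hlen : LA'.length = LB'.length := by simpa using h
    have hp := List.isChain_iff_pairwise.mp hc
    have hpa := List.pairwise_cons.mp hp
    have hpb := List.pairwise_cons.mp hpa.2
    rcases List.mem_cons.mp ha with rfl | ha'
    · refine ⟨b₀, List.mem_cons_self, hpa.1 _ (List.mem_cons_self), ?_⟩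
      intro a' ha' hlt
      rcases List.mem_cons.mp ha' with rfl | ha'
      · omega
      · exact hpb.1 _ (mem_flat_left hlen ha')
    · obtain ⟨b, hb, hab, hmax⟩ :=
        chainL1 LA' LB' hlen (List.isChain_iff_pairwise.mpr hpb.2) a ha'
      refine ⟨b, List.mem_cons_of_mem _ hb, hab, ?_⟩
      intro a' ha'' hlt
      rcases List.mem_cons.mp ha'' with rfl | ha''
      · have := hpa.1 a (List.mem_cons_of_mem _ (mem_flat_left hlen ha'))
        omega
      · exact hmax a' ha'' hlt

/-- In an intertwining chain, each element `b` of the second list has a partner `a` in the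
first list with `a < b` which is above every element of the second list below `b`. -/
private lemma chainL2 : ∀ (LA LB : List ℕ), LA.length = LB.length →
    List.Chain' (· < ·) ((LA.zip LB).flatMap fun p => [p.1, p.2]) →
    ∀ b ∈ LB, ∃ a ∈ LA, a < b ∧ ∀ b' ∈ LB, b' < b → b' < a
  | [], _ :: _, h, _, _, _ => by simp at h
  | _, [], _, _, _, hb => absurd hb List.not_mem_nil
  | a₀ :: LA', b₀ :: LB', h, hc, b, hb => by
    simp only [List.zip_cons_cons, List.flatMap_cons, List.cons_append, List.nil_append]
      at hc
    have hlen : LA'.length = LB'.length := by simpa using h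
    have hp := List.isChain_iff_pairwise.mp hc
    have hpa := List.pairwise_cons.mp hp
    have hpb := List.pairwise_cons.mp hpa.2
    rcases List.mem_cons.mp hb with rfl | hb'
    · refine ⟨a₀, List.mem_cons_self, hpa.1 _ (List.mem_cons_self), ?_⟩
      intro b' hb' hlt
      rcases List.mem_cons.mp hb' with rfl | hb'
      · omega
      · have := hpb.1 _ (mem_flat_right hlen hb')
        omega
    · obtain ⟨a, haL, hab, hmin⟩ :=
        chainL2 LA' LB' hlen (List.isChain_iff_pairwise.mpr hpb.2) b hb'
      refine ⟨a, List.mem_cons_of_mem _ haL, hab, ?_⟩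
      intro b' hb'' hlt
      rcases List.mem_cons.mp hb'' with rfl | hb''
      · exact hpb.1 _ (mem_flat_left hlen haL)
      · exact hmin b' hb'' hlt

/-- If `A` contains both `0` and `1`, then `A` cannot cyclically intertwine with any `B`,
in either order. -/
private lemma no_intertwine_of_adjacent {n : ℕ} (hn : 0 < n) (A B : Finset (ZMod n))
    (h0 : (0 : ZMod n) ∈ A) (h1 : (1 : ZMod n) ∈ A) :
    ¬ CycIntertwines A B ∧ ¬ CycIntertwines B A := by
  haveI : NeZero n := ⟨hn.ne'⟩
  have hordlt : ∀ (i : ZMod n) (S : Finset (ZMod n)) (x : ℕ),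
      x ∈ (S.image (ord i)).sort (· ≤ ·) → x < n := by
    intro i S x hx
    rw [Finset.mem_sort] at hx
    obtain ⟨z, _, rfl⟩ := Finset.mem_image.mp hx
    exact ZMod.val_lt _
  -- relation between positions of 0 and 1
  have hkey : ∀ i : ZMod n,
      ord i 0 = n - 1 ∧ ord i 1 = 0 ∨ ord i 1 = ord i 0 + 1 ∧ ord i 0 + 1 < n := by
    intro i
    have hlt : ord i 0 < n := ZMod.val_lt _
    have he : (1 : ZMod n) - i = (0 - i) + 1 := by ring
    have hv : ord i 1 = (ord i 0 + 1 % n) % n := by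
      rw [ord, he, ZMod.val_add, ZMod.val_one_eq_one_mod]; rfl
    rcases Nat.lt_or_ge 1 n with h2 | h2
    · rw [Nat.mod_eq_of_lt h2] at hv
      rcases eq_or_ne (ord i 0) (n - 1) with he0 | hne
      · left
        refine ⟨he0, ?_⟩
        rw [hv, he0, Nat.sub_add_cancel (by omega), Nat.mod_self]
      · right
        have : ord i 0 + 1 < n := by omega
        rw [hv, Nat.mod_eq_of_lt this]
        exact ⟨rfl, this⟩
    · -- n = 1
      have hn1 : n = 1 := by omega
      left
      subst hn1
      exact ⟨by omega, by rw [hv]; exact Nat.mod_one _⟩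
  constructor
  · rintro ⟨i, hcard, hchain⟩
    set sA := ((A.image (ord i)).sort (· ≤ ·)) with hsA
    set sB := ((B.image (ord i)).sort (· ≤ ·)) with hsB
    have hlen : sA.length = sB.length := by
      simp [hsA, hsB, Finset.length_sort, hcard]
    have hA0 : ord i 0 ∈ sA := by
      rw [hsA, Finset.mem_sort]; exact Finset.mem_image_of_mem _ h0
    have hA1 : ord i 1 ∈ sA := by
      rw [hsA, Finset.mem_sort]; exact Finset.mem_image_of_mem _ h1
    rcases hkey i with ⟨he0, _⟩ | ⟨he1, hlt⟩
    · obtain ⟨b, hb, hab, _⟩ := chainL1 sA sB hlen hchain _ hA0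
      have := hordlt i B b hb
      omega
    · obtain ⟨b, hb, hab, hmax⟩ := chainL1 sA sB hlen hchain _ hA0
      have := hmax _ hA1 (by omega)
      omega
  · rintro ⟨i, hcard, hchain⟩
    set sB := ((B.image (ord i)).sort (· ≤ ·)) with hsB
    set sA := ((A.image (ord i)).sort (· ≤ ·)) with hsA
    have hlen : sB.length = sA.length := by
      simp [hsA, hsB, Finset.length_sort, hcard]
    have hA0 : ord i 0 ∈ sA := by
      rw [hsA, Finset.mem_sort]; exact Finset.mem_image_of_mem _ h0
    have hA1 : ord i 1 ∈ sA := by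
      rw [hsA, Finset.mem_sort]; exact Finset.mem_image_of_mem _ h1
    rcases hkey i with ⟨_, he1⟩ | ⟨he1, hlt⟩
    · obtain ⟨a, haL, hab, _⟩ := chainL2 sB sA hlen hchain _ hA1
      omega
    · obtain ⟨a, haL, hab, hmin⟩ := chainL2 sB sA hlen hchain _ hA1
      have := hmin _ hA0 (by omega)
      omega

/-- Elements of `I_n^{l-1} \ Î_n^{l-1}` do not intertwine (cyclically) any element of
`I_n^{l-1}`: if `I = (i₁,…,i_l)` is increasing with consecutive gaps at least 2 but
`i_l + 2 > i₁ + n`, then for every `J ∈ I_n^{l-1}`, neither `I` intertwines `J` nor `J`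
intertwines `I`. -/
theorem consecutive_tuple_not_intertwining (n l : ℕ) (hn : 0 < n) (hl : 0 < l)
    (t s : Fin l → ℕ)
    (htrange : ∀ j, 1 ≤ t j ∧ t j ≤ n)
    (htgap : ∀ (j : ℕ) (h : j + 1 < l), t ⟨j, by omega⟩ + 2 ≤ t ⟨j + 1, h⟩)
    (hIbad : t ⟨l - 1, by omega⟩ + 2 > t ⟨0, hl⟩ + n)
    (hsrange : ∀ j, 1 ≤ s j ∧ s j ≤ n)
    (hsgap : ∀ (j : ℕ) (h : j + 1 < l), s ⟨j, by omega⟩ + 2 ≤ s ⟨j + 1, h⟩) :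
    ¬ CycIntertwines (Finset.univ.image fun j => ((t j : ℕ) : ZMod n))
        (Finset.univ.image fun j => ((s j : ℕ) : ZMod n)) ∧
      ¬ CycIntertwines (Finset.univ.image fun j => ((s j : ℕ) : ZMod n))
        (Finset.univ.image fun j => ((t j : ℕ) : ZMod n)) := by
  have hmono : ∀ j : ℕ, ∀ h : j < l, t ⟨0, hl⟩ + 2 * j ≤ t ⟨j, h⟩ := by
    intro j
    induction j with
    | zero => intro h; omega
    | succ k ih =>
      intro h
      have h1 := htgap k h
      have h2 := ih (by omega)
      omega
  have hr0 := htrange ⟨0, hl⟩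
  have hrl := htrange ⟨l - 1, by omega⟩
  have hm := hmono (l - 1) (by omega)
  have ht0 : t ⟨0, hl⟩ = 1 := by omega
  have htl : t ⟨l - 1, by omega⟩ = n := by omega
  have h0 : (0 : ZMod n) ∈ Finset.univ.image fun j => ((t j : ℕ) : ZMod n) := by
    refine Finset.mem_image.mpr ⟨⟨l - 1, by omega⟩, Finset.mem_univ _, ?_⟩
    rw [htl, ZMod.natCast_self]
  have h1 : (1 : ZMod n) ∈ Finset.univ.image fun j => ((t j : ℕ) : ZMod n) := by
    refine Finset.mem_image.mpr ⟨⟨0, hl⟩, Finset.mem_univ _, ?_⟩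
    rw [ht0, Nat.cast_one]
  exact no_intertwine_of_adjacent hn _ _ h0 h1
end
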